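/- Let η be a real random variable symmetric about 0 with finite variance σ² > 0 and characteristic function φ_η(t) = E[cos(tη)]; let a > 0, θ_R > 0, and set c = −3a + √(a·(32 + 9a)) and AsV(ω) = (a + 1 − φ_η(2ω)) / (2ω²·φ_η(ω)²). If c/8 < (2π/θ_R)²·σ² < 2, then inf_{ω ∈ (0, 2π/θ_R]} AsV(ω) ≤ σ²·(4a + c) / ( c·(1 − c/16)² ). If instead (2π/θ_R)²·σ² < c/8, then inf_{ω ∈ (0, 2π/θ_R]} AsV(ω) ≤ ( a + 2·(2πσ/θ_R)² ) / ( 2·(2π/θ_R)²·(1 − (2πσ/θ_R)²/2)² ). -/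

import Mathlib

set_option maxHeartbeats 1000000


open MeasureTheory ProbabilityTheory Filter Topology

/-- Upper bounds on the best achievable asymptotic variance
`inf_{ω ∈ (0, 2π/θ_R]} AsV(ω)` for any symmetric sensing noise with finite
variance `s2 = σ² > 0`, where `a = σ_v²/P_T > 0` is the inverse channel SNR and
`c = -3a + √(a (32 + 9a))`. -/
theorem asv_optimum_upper_bounds
    {Ω : Type*} [MeasureSpace Ω] [IsProbabilityMeasure (ℙ : Measure Ω)]
    (η : Ω → ℝ) (hmeas : Measurable η) (hL2 : MemLp η 2 ℙ)
    (hsymm : IdentDistrib η (fun a => -η a) ℙ ℙ)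
    (s2 : ℝ) (hs2 : s2 = ∫ x, (η x) ^ 2 ∂ℙ) (hs2pos : 0 < s2)
    (φ : ℝ → ℝ) (hφ : ∀ t, φ t = ∫ x, Real.cos (t * η x) ∂ℙ)
    (a θR : ℝ) (ha : 0 < a) (hθR : 0 < θR)
    (c : ℝ) (hc : c = -3 * a + Real.sqrt (a * (32 + 9 * a)))
    (AsV : ℝ → ℝ)
    (hAsV : ∀ ω, AsV ω = (a + 1 - φ (2 * ω)) / (2 * ω ^ 2 * (φ ω) ^ 2)) :
    (c / 8 < (2 * Real.pi / θR) ^ 2 * s2 ∧ (2 * Real.pi / θR) ^ 2 * s2 < 2 →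
      sInf (AsV '' Set.Ioc 0 (2 * Real.pi / θR))
        ≤ s2 * (4 * a + c) / (c * (1 - c / 16) ^ 2)) ∧
    ((2 * Real.pi / θR) ^ 2 * s2 < c / 8 →
      sInf (AsV '' Set.Ioc 0 (2 * Real.pi / θR))
        ≤ (a + 2 * ((2 * Real.pi / θR) ^ 2 * s2))
          / (2 * (2 * Real.pi / θR) ^ 2 * (1 - (2 * Real.pi / θR) ^ 2 * s2 / 2) ^ 2)) := by
  have hK : 0 < 2 * Real.pi / θR := div_pos (by positivity) hθR
  -- facts about c
  have hc1 : 3 * a < Real.sqrt (a * (32 + 9 * a)) := by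
    rw [← Real.sqrt_sq (by positivity : (0:ℝ) ≤ 3 * a)]
    exact Real.sqrt_lt_sqrt (by positivity) (by nlinarith)
  have hc2 : Real.sqrt (a * (32 + 9 * a)) < 16 + 3 * a := by
    rw [← Real.sqrt_sq (by positivity : (0:ℝ) ≤ 16 + 3 * a)]
    exact Real.sqrt_lt_sqrt (by positivity) (by nlinarith)
  have hcpos : 0 < c := by rw [hc]; linarith
  have hc16 : c < 16 := by rw [hc]; linarith
  -- integrability
  have hcos_int : ∀ t : ℝ, Integrable (fun x => Real.cos (t * η x)) ℙ := by
    intro t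
    refine Integrable.mono' (integrable_const 1) ?_ ?_
    · exact (Real.measurable_cos.comp (measurable_const.mul hmeas)).aestronglyMeasurable
    · filter_upwards with x
      simpa using Real.abs_cos_le_one (t * η x)
  have hsq_int : Integrable (fun x => η x ^ 2) ℙ := hL2.integrable_sq
  -- bounds on φ
  have hφ_le_one : ∀ t : ℝ, φ t ≤ 1 := by
    intro t
    rw [hφ]
    calc ∫ x, Real.cos (t * η x) ∂ℙ ≤ ∫ _x, (1:ℝ) ∂ℙ :=
          integral_mono (hcos_int t) (integrable_const 1) (fun x => Real.cos_le_one _)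
      _ = 1 := by simp
  have hφ_ge : ∀ t : ℝ, 1 - s2 * t ^ 2 / 2 ≤ φ t := by
    intro t
    rw [hφ, hs2]
    have hint2 : Integrable (fun x => 1 - t ^ 2 / 2 * η x ^ 2) ℙ :=
      (integrable_const 1).sub (hsq_int.const_mul _)
    have hmono := integral_mono hint2 (hcos_int t) (fun x => by
      calc 1 - t ^ 2 / 2 * η x ^ 2 = 1 - (t * η x) ^ 2 / 2 := by ring
        _ ≤ Real.cos (t * η x) := Real.one_sub_sq_div_two_le_cos)
    rw [integral_sub (integrable_const 1) (hsq_int.const_mul _), integral_const_mul,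
      integral_const] at hmono
    simp only [probReal_univ, smul_eq_mul, one_mul] at hmono
    linarith
  -- the set is bounded below by 0
  have hAsV_nonneg : ∀ ω : ℝ, 0 ≤ AsV ω := fun ω => by
    rw [hAsV]
    apply div_nonneg
    · have := hφ_le_one (2 * ω); linarith
    · positivity
  have hbdd : BddBelow (AsV '' Set.Ioc 0 (2 * Real.pi / θR)) :=
    ⟨0, by rintro x ⟨ω, _, rfl⟩; exact hAsV_nonneg ω⟩
  -- key upper bound on AsV
  have key : ∀ ω : ℝ, 0 < ω → ω ^ 2 * s2 < 2 →
      AsV ω ≤ (a + 2 * (ω ^ 2 * s2)) / (2 * ω ^ 2 * (1 - ω ^ 2 * s2 / 2) ^ 2) := by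
    intro ω hω hlt
    have h1 := hφ_ge (2 * ω)
    have h2 := hφ_ge ω
    have h3 : 0 < 1 - ω ^ 2 * s2 / 2 := by linarith
    have hφω : 1 - ω ^ 2 * s2 / 2 ≤ φ ω := by nlinarith
    have hden : 2 * ω ^ 2 * (1 - ω ^ 2 * s2 / 2) ^ 2 ≤ 2 * ω ^ 2 * (φ ω) ^ 2 := by
      have hp := pow_le_pow_left₀ h3.le hφω 2
      nlinarith [sq_nonneg ω]
    rw [hAsV]
    refine div_le_div₀ ?_ ?_ ?_ hden
    · nlinarith [mul_nonneg (sq_nonneg ω) hs2pos.le]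
    · nlinarith
    · have := mul_pos (mul_pos (by norm_num : (0:ℝ) < 2) (pow_pos hω 2)) (pow_pos h3 2)
      linarith
  constructor
  · rintro ⟨h1, h2⟩
    set ω₀ := Real.sqrt (c / (8 * s2)) with hω₀
    have hω₀pos : 0 < ω₀ := Real.sqrt_pos.2 (by positivity)
    have hω₀sq : ω₀ ^ 2 = c / (8 * s2) := Real.sq_sqrt (by positivity)
    have hsq2eq : ω₀ ^ 2 * s2 = c / 8 := by
      rw [hω₀sq]; field_simp
    have hmem : ω₀ ∈ Set.Ioc 0 (2 * Real.pi / θR) := by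
      refine ⟨hω₀pos, le_of_lt ?_⟩
      rw [hω₀]
      refine (Real.sqrt_lt' hK).2 ?_
      rw [div_lt_iff₀ (by positivity)]
      nlinarith
    have hlt2 : ω₀ ^ 2 * s2 < 2 := by rw [hsq2eq]; linarith
    calc sInf (AsV '' Set.Ioc 0 (2 * Real.pi / θR)) ≤ AsV ω₀ :=
          csInf_le hbdd ⟨ω₀, hmem, rfl⟩
      _ ≤ (a + 2 * (ω₀ ^ 2 * s2)) / (2 * ω₀ ^ 2 * (1 - ω₀ ^ 2 * s2 / 2) ^ 2) :=
          key _ hω₀pos hlt2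
      _ = s2 * (4 * a + c) / (c * (1 - c / 16) ^ 2) := by
          rw [hsq2eq, hω₀sq]
          have h16 : (0 : ℝ) < 1 - c / 16 := by linarith
          have h16' : (0 : ℝ) < 1 - c / 8 / 2 := by linarith
          rw [div_eq_div_iff
            (mul_pos (by positivity : (0:ℝ) < 2 * (c / (8 * s2))) (pow_pos h16' 2)).ne'
            (mul_pos hcpos (pow_pos h16 2)).ne']
          field_simp
          ring
  · intro h1
    have hmem : 2 * Real.pi / θR ∈ Set.Ioc 0 (2 * Real.pi / θR) := ⟨hK, le_refl _⟩
    have hlt2 : (2 * Real.pi / θR) ^ 2 * s2 < 2 := by linarith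
    calc sInf (AsV '' Set.Ioc 0 (2 * Real.pi / θR)) ≤ AsV (2 * Real.pi / θR) :=
          csInf_le hbdd ⟨_, hmem, rfl⟩
      _ ≤ _ := key _ hK hlt2
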